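/- arXiv:1607.07920 — 2 statements merged into one kernel-verified Lean document; each statement's English description precedes it below -/
import Mathlib

section
/- Let q ≥ 2 and k ≥ 2, and let C be the single parity check code in (Z_q)^k. Fix a block B = B_{1,0}. For each codeword β ∉ B, there exists exactly one tuple (l_2, ..., l_k) ∈ (Z_q)^{k-1} such that B ∩ B_{2,l_2} ∩ ... ∩ B_{k,l_k} = ∅ and B_{2,l_2} ∩ ... ∩ B_{k,l_k} = {β}. -/
open Finset Filter Topology

/-- The (k, k-1) single parity check code over `ZMod q`, with `k = n+1`:
vectors whose last coordinate equals the sum of the first `n` coordinates. -/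
def SPC (q n : ℕ) : Set (Fin (n+1) → ZMod q) :=
  {c | c (Fin.last n) = ∑ j : Fin n, c (Fin.castSucc j)}

/-- The block `B_{i,l}`: codewords whose `i`-th coordinate equals `l`. -/
def Block (q n : ℕ) (i : Fin (n+1)) (l : ZMod q) : Set (Fin (n+1) → ZMod q) :=
  {c ∈ SPC q n | c i = l}

lemma spc_zero_eq (q m : ℕ) (f : Fin (m+2) → ZMod q) (hf : f ∈ SPC q (m+1)) :
    f 0 = f (Fin.last (m+1)) + f (Fin.last (m+1)) - ∑ j : Fin (m+1), f (Fin.succ j) := by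
  have h1 : ∑ i : Fin (m+2), f i = f 0 + ∑ j : Fin (m+1), f (Fin.succ j) :=
    Fin.sum_univ_succ f
  have h2 : ∑ i : Fin (m+2), f i
      = (∑ j : Fin (m+1), f (Fin.castSucc j)) + f (Fin.last (m+1)) :=
    Fin.sum_univ_castSucc f
  have hf' : f (Fin.last (m+1)) = ∑ j : Fin (m+1), f (Fin.castSucc j) := hf
  rw [h2, ← hf'] at h1
  linear_combination -h1

lemma spc_ext (q m : ℕ) (c β : Fin (m+2) → ZMod q) (hc : c ∈ SPC q (m+1))
    (hβ : β ∈ SPC q (m+1)) (h : ∀ j : Fin (m+1), c (Fin.succ j) = β (Fin.succ j)) :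
    c = β := by
  funext i
  induction i using Fin.cases with
  | succ j => exact h j
  | zero =>
    have hc0 := spc_zero_eq q m c hc
    have hb0 := spc_zero_eq q m β hβ
    have hlast : c (Fin.last (m+1)) = β (Fin.last (m+1)) := by
      rw [← Fin.succ_last, h (Fin.last m)]
    rw [hc0, hb0, hlast]
    congr 1
    exact Finset.sum_congr rfl fun j _ => h j

/-- for each codeword β outside the block B = B_{1,0}, there is exactly one
tuple (l₂,…,l_k) with B ∩ B_{2,l₂} ∩ … ∩ B_{k,l_k} = ∅ and B_{2,l₂} ∩ … ∩ B_{k,l_k} = {β}. -/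
theorem stmt_8 (q n : ℕ) (hq : 2 ≤ q) (hn : 1 ≤ n)
    (β : Fin (n+1) → ZMod q) (hβ : β ∈ SPC q n) (hβB : β ∉ Block q n 0 0) :
    ∃! l : Fin n → ZMod q,
      Block q n 0 0 ∩ (⋂ j : Fin n, Block q n (Fin.succ j) (l j)) = ∅ ∧
      (⋂ j : Fin n, Block q n (Fin.succ j) (l j)) = {β} := by
  obtain ⟨m, rfl⟩ : ∃ m, n = m + 1 := ⟨n - 1, by omega⟩
  have hβ0 : β 0 ≠ 0 := by
    intro h
    exact hβB ⟨hβ, h⟩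
  refine ⟨fun j => β (Fin.succ j), ⟨?_, ?_⟩, ?_⟩
  · ext c
    simp only [Set.mem_inter_iff, Set.mem_iInter, Set.mem_empty_iff_false, iff_false]
    rintro ⟨⟨hcS, hc0⟩, hcj⟩
    have : c = β := spc_ext q m c β hcS hβ fun j => (hcj j).2
    exact hβ0 (this ▸ hc0)
  · ext c
    simp only [Set.mem_iInter, Set.mem_singleton_iff]
    constructor
    · intro hcj
      exact spc_ext q m c β ((hcj 0).1) hβ fun j => (hcj j).2
    · rintro rfl j
      exact ⟨hβ, rfl⟩
  · intro l' ⟨h1, h2⟩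
    have hβmem : β ∈ ⋂ j : Fin (m+1), Block q (m+1) (Fin.succ j) (l' j) := by
      rw [h2]; rfl
    funext j
    have := (Set.mem_iInter.mp hβmem j).2
    exact this.symm
end

section
/- Let q ≥ 2 and k ≥ 3. In the single parity check code design, for any two blocks B_{i,l} and B_{j,l'} from distinct parallel classes (i ≠ j), the intersection B_{i,l} ∩ B_{j,l'} has exactly q^{k-3} elements. -/
open Finset Filter Topology

/-- Complement of the three coordinates `i`, `j`, `p`. -/
def Sc (n : ℕ) (i j p : Fin (n+1)) : Finset (Fin (n+1)) := ({i, j, p} : Finset _)ᶜ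

/-- Extend a function on `Sc` by `l` at `i`, `l'` at `j`, `0` at `p`. -/
def baseF (q n : ℕ) (i j p : Fin (n+1)) (l l' : ZMod q)
    (f : {x // x ∈ Sc n i j p} → ZMod q) : Fin (n+1) → ZMod q :=
  fun m => if h : m ∈ Sc n i j p then f ⟨m, h⟩ else if m = i then l else if m = j then l' else 0

/-- Correct the value at `p` so the parity check holds. -/
noncomputable def PhiF (q n : ℕ) (i j p : Fin (n+1)) (l l' : ZMod q)
    (f : {x // x ∈ Sc n i j p} → ZMod q) : Fin (n+1) → ZMod q :=
  Function.update (baseF q n i j p l l' f) p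
    (if p = Fin.last n then ∑ m : Fin n, baseF q n i j p l l' f m.castSucc
     else baseF q n i j p l l' f (Fin.last n) - ∑ m : Fin n, baseF q n i j p l l' f m.castSucc)

/-- two blocks from distinct parallel classes intersect in exactly
q^(k-3) codewords (k = n+1 ≥ 3). -/
theorem stmt_15 (q n : ℕ) (hq : 2 ≤ q) (hn : 2 ≤ n)
    (i j : Fin (n+1)) (hij : i ≠ j) (l l' : ZMod q) :
    (Block q n i l ∩ Block q n j l').ncard = q ^ (n - 2) := by
  classical
  obtain ⟨p, hpi, hpj⟩ : ∃ p : Fin (n+1), p ≠ i ∧ p ≠ j := by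
    by_contra h
    push_neg at h
    have hsub : (Finset.univ : Finset (Fin (n+1))) ⊆ {i, j} := by
      intro x _
      by_cases hx : x = i
      · simp [hx]
      · simp [h x hx]
    have := Finset.card_le_card hsub
    have h2 : ({i, j} : Finset (Fin (n+1))).card ≤ 2 :=
      (Finset.card_insert_le _ _).trans (by simp)
    simp [Finset.card_univ] at this
    omega
  have hiS : i ∉ Sc n i j p := by simp [Sc]
  have hjS : j ∉ Sc n i j p := by simp [Sc]
  have hpS : p ∉ Sc n i j p := by simp [Sc]
  -- basic values of baseF
  have hbase_i : ∀ f, baseF q n i j p l l' f i = l := by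
    intro f; simp [baseF, hiS]
  have hbase_j : ∀ f, baseF q n i j p l l' f j = l' := by
    intro f; simp [baseF, hjS, hij.symm]
  have hbase_p : ∀ f, baseF q n i j p l l' f p = 0 := by
    intro f; simp [baseF, hpS, hpi, hpj]
  have hbase_S : ∀ f (m : Fin (n+1)) (h : m ∈ Sc n i j p),
      baseF q n i j p l l' f m = f ⟨m, h⟩ := by
    intro f m h; simp [baseF, h]
  -- Phi agrees with base away from p
  have hPhi_ne : ∀ f (m : Fin (n+1)), m ≠ p →
      PhiF q n i j p l l' f m = baseF q n i j p l l' f m := by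
    intro f m hm
    simp [PhiF, Function.update_of_ne hm]
  -- value of Phi at p, two cases
  have hPhi_p_last : ∀ f, p = Fin.last n →
      PhiF q n i j p l l' f p = ∑ m : Fin n, baseF q n i j p l l' f m.castSucc := by
    intro f hpl
    simp only [PhiF, if_pos hpl]
    exact Function.update_self _ _ _
  have hPhi_p_ne : ∀ f, p ≠ Fin.last n →
      PhiF q n i j p l l' f p
        = baseF q n i j p l l' f (Fin.last n)
          - ∑ m : Fin n, baseF q n i j p l l' f m.castSucc := by
    intro f hpl
    simp only [PhiF, if_neg hpl]
    exact Function.update_self _ _ _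
  -- Phi lands in the intersection
  have hmem : ∀ f, PhiF q n i j p l l' f ∈ Block q n i l ∩ Block q n j l' := by
    intro f
    have hPi : PhiF q n i j p l l' f i = l := by rw [hPhi_ne f i (Ne.symm hpi)]; exact hbase_i f
    have hPj : PhiF q n i j p l l' f j = l' := by rw [hPhi_ne f j (Ne.symm hpj)]; exact hbase_j f
    have hspc : PhiF q n i j p l l' f ∈ SPC q n := by
      by_cases hpl : p = Fin.last n
      · have hsum : ∀ m : Fin n, PhiF q n i j p l l' f m.castSucc
            = baseF q n i j p l l' f m.castSucc := by
          intro m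
          exact hPhi_ne f m.castSucc (by rw [hpl]; exact (Fin.castSucc_lt_last m).ne)
        show PhiF q n i j p l l' f (Fin.last n) = _
        rw [← hpl, hPhi_p_last f hpl]
        exact (Finset.sum_congr rfl fun m _ => (hsum m).symm)
      · obtain ⟨r, hr⟩ := Fin.exists_castSucc_eq.mpr hpl
        have hlast : PhiF q n i j p l l' f (Fin.last n) = baseF q n i j p l l' f (Fin.last n) :=
          hPhi_ne f (Fin.last n) (fun h => hpl h.symm)
        have hsum_ne : ∀ m : Fin n, m ≠ r → PhiF q n i j p l l' f m.castSucc
            = baseF q n i j p l l' f m.castSucc := by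
          intro m hm
          exact hPhi_ne f m.castSucc
            (by rw [← hr]; exact fun h => hm (Fin.castSucc_injective n h))
        show PhiF q n i j p l l' f (Fin.last n) = ∑ m : Fin n, PhiF q n i j p l l' f m.castSucc
        rw [hlast]
        rw [← Finset.sum_erase_add _ _ (Finset.mem_univ r)]
        have h1 : ∑ m ∈ Finset.univ.erase r, PhiF q n i j p l l' f m.castSucc
            = ∑ m ∈ Finset.univ.erase r, baseF q n i j p l l' f m.castSucc :=
          Finset.sum_congr rfl fun m hm => hsum_ne m (Finset.ne_of_mem_erase hm)
        have h2 : PhiF q n i j p l l' f r.castSucc = PhiF q n i j p l l' f p := by rw [hr]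
        have h3 : ∑ m : Fin n, baseF q n i j p l l' f m.castSucc
            = ∑ m ∈ Finset.univ.erase r, baseF q n i j p l l' f m.castSucc := by
          rw [← Finset.sum_erase_add _ _ (Finset.mem_univ r), hr, hbase_p]
          ring
        rw [h1, h2, hPhi_p_ne f hpl, h3]
        ring
    exact ⟨⟨hspc, hPi⟩, ⟨hspc, hPj⟩⟩
  -- injectivity
  have hinj : Function.Injective (PhiF q n i j p l l' :
      ({x // x ∈ Sc n i j p} → ZMod q) → (Fin (n+1) → ZMod q)) := by
    intro f g hfg
    funext m
    obtain ⟨m, hm⟩ := m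
    have hmp : m ≠ p := fun h => hpS (h ▸ hm)
    have := congrFun hfg m
    rw [hPhi_ne f m hmp, hPhi_ne g m hmp, hbase_S f m hm, hbase_S g m hm] at this
    exact this
  -- surjectivity onto the intersection
  have hrange : Block q n i l ∩ Block q n j l' = Set.range (PhiF q n i j p l l') := by
    apply Set.Subset.antisymm
    · rintro c ⟨⟨hcspc, hci⟩, ⟨-, hcj⟩⟩
      refine ⟨fun m => c m, ?_⟩
      set f : {x // x ∈ Sc n i j p} → ZMod q := fun m => c m with hf
      have hbc : ∀ m : Fin (n+1), m ≠ p → baseF q n i j p l l' f m = c m := by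
        intro m hmp
        by_cases hm : m ∈ Sc n i j p
        · rw [hbase_S f m hm]
        · by_cases hmi : m = i
          · rw [hmi, hbase_i, hci]
          · have hmj : m = j := by
              simp only [Sc, Finset.mem_compl, not_not, Finset.mem_insert,
                Finset.mem_singleton] at hm
              rcases hm with h | h | h
              · exact absurd h hmi
              · exact h
              · exact absurd h hmp
            rw [hmj, hbase_j, hcj]
      funext m
      by_cases hmp : m = p
      · rw [hmp]
        by_cases hpl : p = Fin.last n
        · rw [hPhi_p_last f hpl]
          have : ∑ r : Fin n, baseF q n i j p l l' f r.castSucc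
              = ∑ r : Fin n, c r.castSucc :=
            Finset.sum_congr rfl fun r _ =>
              hbc r.castSucc (by rw [hpl]; exact (Fin.castSucc_lt_last r).ne)
          rw [this, hpl]
          exact hcspc.symm
        · obtain ⟨r, hr⟩ := Fin.exists_castSucc_eq.mpr hpl
          rw [hPhi_p_ne f hpl]
          have hbl : baseF q n i j p l l' f (Fin.last n) = c (Fin.last n) :=
            hbc _ (fun h => hpl h.symm)
          have hsum : ∑ s : Fin n, baseF q n i j p l l' f s.castSucc
              = (∑ s : Fin n, c s.castSucc) - c p := by
            rw [← Finset.sum_erase_add _ _ (Finset.mem_univ r), hr, hbase_p]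
            have hc : ∑ s : Fin n, c s.castSucc
                = ∑ s ∈ Finset.univ.erase r, c s.castSucc + c p := by
              rw [← Finset.sum_erase_add _ (fun s : Fin n => c s.castSucc)
                (Finset.mem_univ r), hr]
            rw [hc]
            have : ∑ s ∈ Finset.univ.erase r, baseF q n i j p l l' f s.castSucc
                = ∑ s ∈ Finset.univ.erase r, c s.castSucc :=
              Finset.sum_congr rfl fun s hs =>
                hbc s.castSucc (by
                  rw [← hr]
                  exact fun h => (Finset.ne_of_mem_erase hs) (Fin.castSucc_injective n h))
            rw [this]
            ring
          rw [hbl, hsum, hcspc]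
          ring
      · rw [hPhi_ne f m hmp, hbc m hmp]
    · rintro c ⟨f, rfl⟩
      exact hmem f
  rw [hrange]
  have : NeZero q := ⟨by omega⟩
  rw [Set.ncard_eq_toFinset_card', Set.toFinset_range, Finset.card_image_of_injective _ hinj]
  rw [Finset.card_univ, Fintype.card_fun]
  have hScard : (Sc n i j p).card = n - 2 := by
    have h3 : ({i, j, p} : Finset (Fin (n+1))).card = 3 := by
      rw [Finset.card_insert_of_notMem (by simp [hij, Ne.symm hpi]),
          Finset.card_insert_of_notMem (by simp [Ne.symm hpj]),
          Finset.card_singleton]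
    rw [Sc, Finset.card_compl, h3, Fintype.card_fin]
    omega
  rw [Fintype.card_coe, hScard, ZMod.card]
end
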